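/- Let ν_n, ν be probability measures on ℝ^d with characteristic functions φ_n, φ. If φ_n(a) → φ(a) for Lebesgue-almost every a ∈ ℝ^d, then ν_n converges weakly to ν. -/

import Mathlib

open MeasureTheory Filter Topology


open MeasureTheory Filter Topology Complex Real
open scoped FourierTransform RealInnerProductSpace SchwartzMap Pointwise

variable {V : Type*} [NormedAddCommGroup V] [InnerProductSpace ℝ V]
  [FiniteDimensional ℝ V] [MeasurableSpace V] [BorelSpace V]

noncomputable def charf (P : Measure V) (a : V) : ℂ :=
  ∫ x, Complex.exp ((⟪a, x⟫ : ℝ) * Complex.I) ∂P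

lemma charf_norm_le (P : Measure V) [IsProbabilityMeasure P] (a : V) : ‖charf P a‖ ≤ 1 := by
  calc ‖charf P a‖ ≤ ∫ x, ‖Complex.exp ((⟪a, x⟫ : ℝ) * Complex.I)‖ ∂P :=
        norm_integral_le_integral_norm _
    _ = ∫ (_ : V), (1:ℝ) ∂P := by
        congr 1; ext x; simp [Complex.norm_exp_ofReal_mul_I]
    _ = 1 := by simp

lemma charf_continuous (P : Measure V) [IsProbabilityMeasure P] : Continuous (charf P) := by
  apply MeasureTheory.continuous_of_dominated (bound := fun _ => (1:ℝ))
  · intro a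
    exact (Complex.continuous_exp.comp ((Complex.continuous_ofReal.comp
      (continuous_const.inner continuous_id)).mul continuous_const)).aestronglyMeasurable
  · intro a
    filter_upwards with x
    simp [Complex.norm_exp_ofReal_mul_I]
  · exact integrable_const 1
  · filter_upwards with x
    exact Complex.continuous_exp.comp ((Complex.continuous_ofReal.comp
      ((continuous_id.inner continuous_const))).mul continuous_const)

set_option linter.unusedSectionVars false

variable [CompleteSpace V] [SecondCountableTopology V]

lemma fourier_swap (P : Measure V) [IsProbabilityMeasure P] (g : 𝓢(V, ℂ)) :
    ∫ x, g x ∂P = ∫ ξ, charf P ((2 * π) • ξ) * (𝓕 ⇑g) ξ := by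
  have hg : Integrable (⇑g) volume := g.integrable
  have hF : Integrable (𝓕 ⇑g) volume := by
    have := (SchwartzMap.fourierTransformCLM ℂ g).integrable (μ := (volume : Measure V))
    rwa [SchwartzMap.fourierTransformCLM_apply] at this
  have hinv : ∀ x : V, g x = ∫ ξ, Complex.exp ((2 * π * ⟪ξ, x⟫ : ℝ) * Complex.I) • (𝓕 ⇑g) ξ := by
    intro x
    conv_lhs => rw [← g.continuous.fourierInv_fourier_eq hg hF]
    rw [Real.fourierInv_eq']
  have hnorm : ∀ (r : ℝ) (z : ℂ), ‖Complex.exp ((r : ℂ) * Complex.I) • z‖ = ‖z‖ := by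
    intro r z
    rw [norm_smul]
    simp [Complex.norm_exp_ofReal_mul_I]
  have hc1 : Continuous fun p : V × V => Complex.exp ((2 * π * ⟪p.2, p.1⟫ : ℝ) * Complex.I) :=
    Complex.continuous_exp.comp ((Complex.continuous_ofReal.comp
      (continuous_const.mul (continuous_snd.inner continuous_fst))).mul continuous_const)
  have hFc : Continuous (𝓕 ⇑g) := (SchwartzMap.fourierTransformCLM ℂ g).continuous
  have hcont : Continuous fun p : V × V =>
      Complex.exp ((2 * π * ⟪p.2, p.1⟫ : ℝ) * Complex.I) • (𝓕 ⇑g) p.2 :=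
    hc1.smul (hFc.comp continuous_snd)
  have hint : Integrable (Function.uncurry fun x ξ =>
      Complex.exp ((2 * π * ⟪ξ, x⟫ : ℝ) * Complex.I) • (𝓕 ⇑g) ξ) (P.prod volume) := by
    have huc : (Function.uncurry fun x ξ =>
        Complex.exp ((2 * π * ⟪ξ, x⟫ : ℝ) * Complex.I) • (𝓕 ⇑g) ξ) = fun p : V × V =>
        Complex.exp ((2 * π * ⟪p.2, p.1⟫ : ℝ) * Complex.I) • (𝓕 ⇑g) p.2 := rfl
    rw [huc, MeasureTheory.integrable_prod_iff hcont.aestronglyMeasurable]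
    constructor
    · filter_upwards with x
      refine hF.norm.mono' ?_ ?_
      · exact (hc1.comp (Continuous.prodMk_right x)).smul hFc |>.aestronglyMeasurable
      · filter_upwards with ξ
        rw [hnorm]
    · apply MeasureTheory.Integrable.congr (integrable_const (∫ ξ, ‖(𝓕 ⇑g) ξ‖))
      filter_upwards with x
      congr 1
      ext ξ
      rw [hnorm]
  calc ∫ x, g x ∂P
      = ∫ x, ∫ ξ, Complex.exp ((2 * π * ⟪ξ, x⟫ : ℝ) * Complex.I) • (𝓕 ⇑g) ξ ∂volume ∂P := by
        exact integral_congr_ae (Filter.Eventually.of_forall hinv)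
    _ = ∫ ξ, ∫ x, Complex.exp ((2 * π * ⟪ξ, x⟫ : ℝ) * Complex.I) • (𝓕 ⇑g) ξ ∂P ∂volume :=
        MeasureTheory.integral_integral_swap hint
    _ = ∫ ξ, charf P ((2 * π) • ξ) * (𝓕 ⇑g) ξ := by
        congr 1
        ext ξ
        simp only [smul_eq_mul]
        rw [integral_mul_const]
        congr 1
        rw [charf]
        congr 1
        ext x
        rw [real_inner_smul_left]
  rfl

lemma ae_smul_transfer {p : V → Prop} (h : ∀ᵐ a : V, p a) :
    ∀ᵐ ξ : V, p ((2 * π) • ξ) := by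
  rw [ae_iff] at h ⊢
  have hsub : {ξ : V | ¬ p ((2 * π) • ξ)} ⊆ (2 * π)⁻¹ • {a : V | ¬ p a} := by
    intro ξ hξ
    rw [Set.mem_inv_smul_set_iff₀ (by positivity : (2 * π : ℝ) ≠ 0)]
    exact hξ
  refine measure_mono_null hsub ?_
  rw [MeasureTheory.Measure.addHaar_smul]
  simp [h]

lemma schwartz_tendsto (μ : ℕ → Measure V) (μl : Measure V)
    [∀ n, IsProbabilityMeasure (μ n)] [IsProbabilityMeasure μl]
    (hae : ∀ᵐ a : V, Tendsto (fun n => charf (μ n) a) atTop (𝓝 (charf μl a)))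
    (g : 𝓢(V, ℂ)) :
    Tendsto (fun n => ∫ x, g x ∂(μ n)) atTop (𝓝 (∫ x, g x ∂μl)) := by
  simp only [fun n => fourier_swap (μ n) g, fourier_swap μl g]
  apply MeasureTheory.tendsto_integral_of_dominated_convergence
    (bound := fun ξ => ‖(𝓕 ⇑g) ξ‖)
  · intro n
    exact ((charf_continuous (μ n)).comp (continuous_const.smul continuous_id)|>.mul
      (SchwartzMap.fourierTransformCLM ℂ g).continuous).aestronglyMeasurable
  · have hF : Integrable (𝓕 ⇑g) volume := by
      have := (SchwartzMap.fourierTransformCLM ℂ g).integrable (μ := (volume : Measure V))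
      rwa [SchwartzMap.fourierTransformCLM_apply] at this
    exact hF.norm
  · intro n
    filter_upwards with ξ
    rw [norm_mul]
    calc ‖charf (μ n) ((2*π) • ξ)‖ * ‖(𝓕 ⇑g) ξ‖ ≤ 1 * ‖(𝓕 ⇑g) ξ‖ := by
          gcongr; exact charf_norm_le _ _
      _ = ‖(𝓕 ⇑g) ξ‖ := one_mul _
  · filter_upwards [ae_smul_transfer hae] with ξ hξ
    exact hξ.mul_const _

noncomputable def toSchwartz (f : V → ℂ) (h1 : ContDiff ℝ ((⊤ : ℕ∞)) f) (h2 : HasCompactSupport f) :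
    𝓢(V, ℂ) where
  toFun := f
  smooth' := h1
  decay' := by
    intro k n
    have hcont : Continuous fun x => ‖x‖ ^ k * ‖iteratedFDeriv ℝ n f x‖ :=
      ((continuous_norm.pow k).mul ((h1.continuous_iteratedFDeriv (by exact_mod_cast le_top)).norm))
    have hcs : HasCompactSupport fun x => ‖x‖ ^ k * ‖iteratedFDeriv ℝ n f x‖ := by
      apply HasCompactSupport.mul_left
      exact (h2.iteratedFDeriv n).norm
    obtain ⟨C, hC⟩ := hcont.bounded_above_of_compact_support hcs
    exact ⟨C, fun x => by simpa [_root_.abs_of_nonneg (by positivity : (0:ℝ) ≤ ‖x‖ ^ k * ‖iteratedFDeriv ℝ n f x‖)] using hC x⟩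

@[simp] lemma toSchwartz_apply (f : V → ℂ) (h1 h2) (x : V) : toSchwartz f h1 h2 x = f x := rfl

lemma mvpoly_contDiff (d : ℕ) (q : MvPolynomial (Fin d) ℝ) :
    ContDiff ℝ ((⊤ : ℕ∞)) fun x : EuclideanSpace ℝ (Fin d) =>
      MvPolynomial.aeval (fun i => x i) q := by
  induction q using MvPolynomial.induction_on with
  | C a => simpa using contDiff_const
  | add p q hp hq => simpa [map_add] using hp.add hq
  | mul_X p i hp =>
      simp only [map_mul, MvPolynomial.aeval_X]
      exact hp.mul (EuclideanSpace.proj (𝕜 := ℝ) i).contDiff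

lemma smooth_poly_approx {d : ℕ} {K : Set (EuclideanSpace ℝ (Fin d))} (hK : IsCompact K)
    {f : EuclideanSpace ℝ (Fin d) → ℝ} (hf : Continuous f) {ε : ℝ} (hε : 0 < ε) :
    ∃ p : EuclideanSpace ℝ (Fin d) → ℝ, ContDiff ℝ ((⊤ : ℕ∞)) p ∧ ∀ x ∈ K, |f x - p x| < ε := by
  haveI : CompactSpace K := isCompact_iff_compactSpace.mp hK
  set Φ : MvPolynomial (Fin d) ℝ →ₐ[ℝ] C(K, ℝ) :=
    MvPolynomial.aeval (fun i => ContinuousMap.mk (fun x : K => (x : EuclideanSpace ℝ (Fin d)) i)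
      (by fun_prop)) with hΦ
  have sep : (Φ.range : Subalgebra ℝ C(K, ℝ)).SeparatesPoints := by
    intro x y hxy
    have : (x : EuclideanSpace ℝ (Fin d)) ≠ y := Subtype.coe_injective.ne hxy
    obtain ⟨i, hi⟩ : ∃ i, (x : EuclideanSpace ℝ (Fin d)) i ≠ (y : EuclideanSpace ℝ (Fin d)) i := by
      by_contra hcon
      push_neg at hcon
      exact this (PiLp.ext hcon)
    refine ⟨⇑(Φ (MvPolynomial.X i)), ⟨Φ (MvPolynomial.X i), AlgHom.mem_range_self _ _, rfl⟩, ?_⟩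
    simpa [hΦ, MvPolynomial.aeval_X] using hi
  obtain ⟨g, hg⟩ := ContinuousMap.exists_mem_subalgebra_near_continuous_of_separatesPoints
    Φ.range sep (fun x : K => f x) (hf.comp continuous_subtype_val) ε hε
  obtain ⟨q, hq⟩ := g.2
  have hq' : Φ q = (g : C(K, ℝ)) := hq
  refine ⟨fun x => MvPolynomial.aeval (fun i => x i) q, mvpoly_contDiff d q, ?_⟩
  intro x hx
  have h2 : (g : C(K, ℝ)) ⟨x, hx⟩ = (MvPolynomial.aeval fun i => x i) q := by
    calc (g : C(K, ℝ)) ⟨x, hx⟩ = (Φ q) ⟨x, hx⟩ := by rw [hq']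
      _ = ((ContinuousMap.evalAlgHom ℝ ℝ (⟨x, hx⟩ : K)).comp Φ) q := rfl
      _ = (MvPolynomial.aeval fun i => x i) q := by rw [hΦ, MvPolynomial.comp_aeval]; rfl
  show |f x - (MvPolynomial.aeval fun i => x i) q| < ε
  rw [← h2]
  have h1 := hg ⟨x, hx⟩
  rw [Real.norm_eq_abs] at h1
  rw [abs_sub_comm]
  exact h1

lemma integral_ofReal_eq {α : Type*} [MeasurableSpace α] (P : Measure α) (u : α → ℝ) :
    ∫ x, ((u x : ℝ) : ℂ) ∂P = ((∫ x, u x ∂P : ℝ) : ℂ) :=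
  integral_ofReal

lemma tendsto_real_of_complex {u : ℕ → ℝ} {L : ℝ}
    (h : Tendsto (fun n => ((u n : ℝ) : ℂ)) atTop (𝓝 (L : ℂ))) :
    Tendsto u atTop (𝓝 L) := by
  have := (Complex.continuous_re.tendsto _).comp h
  simpa [Function.comp_def] using this

lemma main_eucl (d : ℕ) (μ : ℕ → Measure (EuclideanSpace ℝ (Fin d)))
    (μl : Measure (EuclideanSpace ℝ (Fin d)))
    [∀ n, IsProbabilityMeasure (μ n)] [IsProbabilityMeasure μl]
    (hae : ∀ᵐ a : EuclideanSpace ℝ (Fin d),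
      Tendsto (fun n => charf (μ n) a) atTop (𝓝 (charf μl a)))
    (f : BoundedContinuousFunction (EuclideanSpace ℝ (Fin d)) ℝ) :
    Tendsto (fun n => ∫ x, f x ∂(μ n)) atTop (𝓝 (∫ x, f x ∂μl)) := by
  rw [Metric.tendsto_nhds]
  intro δ hδ
  set M := ‖f‖ with hMdef
  have hM : 0 ≤ M := norm_nonneg f
  set ε := δ / (4 * (M + 1)) with hεdef
  have hε0 : 0 < ε := by positivity
  -- tightness of the limit measure
  obtain ⟨R, hR0, hRmeas⟩ : ∃ R : ℝ, 0 < R ∧ 1 - ε ≤ (μl (Metric.closedBall 0 R)).toReal := by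
    have hmono : Monotone fun n : ℕ => Metric.closedBall (0 : EuclideanSpace ℝ (Fin d)) n := by
      intro m n hmn
      exact Metric.closedBall_subset_closedBall (by exact_mod_cast hmn)
    have hunion : ⋃ n : ℕ, Metric.closedBall (0 : EuclideanSpace ℝ (Fin d)) n = Set.univ := by
      ext x
      simp only [Set.mem_iUnion, Metric.mem_closedBall, Set.mem_univ, iff_true]
      obtain ⟨n, hn⟩ := exists_nat_ge (dist x 0)
      exact ⟨n, hn⟩
    have htend := tendsto_measure_iUnion_atTop (μ := μl) hmono
    rw [hunion, measure_univ] at htend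
    have htoReal : Tendsto (fun n : ℕ =>
        (μl (Metric.closedBall 0 n)).toReal) atTop (𝓝 1) := by
      have : ContinuousAt ENNReal.toReal 1 := ENNReal.continuousAt_toReal (by simp)
      simpa [Function.comp_def] using (this.tendsto.comp htend)
    have := (htoReal.eventually (eventually_ge_nhds (show 1 - ε < 1 by linarith))).exists
    obtain ⟨n, hn⟩ := this
    exact ⟨(n : ℝ) + 1, by positivity, le_trans hn (by
      apply ENNReal.toReal_mono (measure_ne_top _ _)
      exact measure_mono (Metric.closedBall_subset_closedBall (by linarith)))⟩
  -- the bump function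
  set b : ContDiffBump (0 : EuclideanSpace ℝ (Fin d)) :=
    ⟨R, R + 1, hR0, by linarith⟩ with hbdef
  have hbcs : HasCompactSupport ⇑b := b.hasCompactSupport
  have hbint : ∀ (P : Measure (EuclideanSpace ℝ (Fin d))) [IsProbabilityMeasure P],
      Integrable ⇑b P := fun P _ => b.continuous.integrable_of_hasCompactSupport hbcs
  -- ∫ b ∂μl ≥ 1 - ε
  have hbl : 1 - ε ≤ ∫ x, b x ∂μl := by
    refine le_trans hRmeas ?_
    rw [← measureReal_def, ← MeasureTheory.integral_indicator_one Metric.isClosed_closedBall.measurableSet]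
    apply integral_mono ((integrable_const (1:ℝ)).indicator
      Metric.isClosed_closedBall.measurableSet) (hbint μl)
    intro x
    by_cases hx : x ∈ Metric.closedBall (0 : EuclideanSpace ℝ (Fin d)) R
    · simp only [Set.indicator_of_mem hx, Pi.one_apply]
      exact le_of_eq (b.one_of_mem_closedBall hx).symm
    · simp only [Set.indicator_of_notMem hx]
      exact b.nonneg
  -- convergence of ∫ b ∂μ n
  have hbtend : Tendsto (fun n => ∫ x, b x ∂(μ n)) atTop (𝓝 (∫ x, b x ∂μl)) := by
    apply tendsto_real_of_complex
    have := schwartz_tendsto μ μl hae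
      (toSchwartz (fun x => ((b x : ℝ) : ℂ))
        (Complex.ofRealCLM.contDiff.comp b.contDiff)
        (hbcs.comp_left (g := Complex.ofReal) Complex.ofReal_zero))
    simp only [← integral_ofReal_eq]; exact this
  have hbev : ∀ᶠ n in atTop, 1 - 2*ε ≤ ∫ x, b x ∂(μ n) :=
    hbtend.eventually (eventually_ge_nhds (by linarith))
  -- polynomial approximation of f on the support of b
  obtain ⟨p, hpsmooth, hpapprox⟩ := smooth_poly_approx
    (isCompact_closedBall (0 : EuclideanSpace ℝ (Fin d)) (R+1)) f.continuous hε0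
  set g : EuclideanSpace ℝ (Fin d) → ℝ := fun x => p x * b x with hgdef
  have hgsmooth : ContDiff ℝ ((⊤ : ℕ∞)) g := hpsmooth.mul b.contDiff
  have hgcs : HasCompactSupport g := HasCompactSupport.mul_left hbcs
  have hgint : ∀ (P : Measure (EuclideanSpace ℝ (Fin d))) [IsProbabilityMeasure P],
      Integrable g P := fun P _ => hgsmooth.continuous.integrable_of_hasCompactSupport hgcs
  have hgtend : Tendsto (fun n => ∫ x, g x ∂(μ n)) atTop (𝓝 (∫ x, g x ∂μl)) := by
    apply tendsto_real_of_complex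
    have := schwartz_tendsto μ μl hae
      (toSchwartz (fun x => ((g x : ℝ) : ℂ))
        (Complex.ofRealCLM.contDiff.comp hgsmooth)
        (hgcs.comp_left (g := Complex.ofReal) Complex.ofReal_zero))
    simp only [← integral_ofReal_eq]; exact this
  -- pointwise bound
  have hbound : ∀ x, |f x - g x| ≤ M * (1 - b x) + ε := by
    intro x
    by_cases hx : x ∈ Metric.closedBall (0 : EuclideanSpace ℝ (Fin d)) (R+1)
    · have h1 : |f x - p x| ≤ ε := le_of_lt (hpapprox x hx)
      have : f x - g x = f x * (1 - b x) + (f x - p x) * b x := by rw [hgdef]; ring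
      rw [this]
      have hfxM : |f x| ≤ M := by
        have := f.norm_coe_le_norm x
        rwa [Real.norm_eq_abs] at this
      have hb1x : (0:ℝ) ≤ 1 - b x := by linarith [b.le_one (x := x)]
      have t1 : |f x * (1 - b x)| ≤ M * (1 - b x) := by
        rw [abs_mul, _root_.abs_of_nonneg hb1x]
        exact mul_le_mul_of_nonneg_right hfxM hb1x
      have t2 : |(f x - p x) * b x| ≤ ε * 1 := by
        rw [abs_mul, _root_.abs_of_nonneg b.nonneg]
        exact mul_le_mul h1 b.le_one b.nonneg (le_of_lt hε0)
      calc |f x * (1 - b x) + (f x - p x) * b x|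
          ≤ |f x * (1 - b x)| + |(f x - p x) * b x| := abs_add_le _ _
        _ ≤ M * (1 - b x) + ε := by linarith
    · have hb0 : b x = 0 := by
        apply b.zero_of_le_dist
        simp only [Metric.mem_closedBall, not_le] at hx
        exact le_of_lt hx
      have : g x = 0 := by rw [hgdef]; simp [hb0]
      rw [this, sub_zero, hb0]
      have hfxM : |f x| ≤ M := by
        have := f.norm_coe_le_norm x
        rwa [Real.norm_eq_abs] at this
      calc |f x| ≤ M := hfxM
        _ ≤ M * (1 - 0) + ε := by linarith
  -- integral bound
  have hkey : ∀ (P : Measure (EuclideanSpace ℝ (Fin d))) [IsProbabilityMeasure P],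
      |∫ x, f x ∂P - ∫ x, g x ∂P| ≤ M * (1 - ∫ x, b x ∂P) + ε := by
    intro P _
    rw [← integral_sub (f.integrable P) (hgint P)]
    have i1 : Integrable (fun x => M * (1 - b x)) P :=
      (((integrable_const (1:ℝ)).sub (hbint P)).const_mul M)
    calc |∫ x, (f x - g x) ∂P| = ‖∫ x, (f x - g x) ∂P‖ := (Real.norm_eq_abs _).symm
      _ ≤ ∫ x, ‖f x - g x‖ ∂P := norm_integral_le_integral_norm _
      _ = ∫ x, |f x - g x| ∂P := by simp [Real.norm_eq_abs]
      _ ≤ ∫ x, (M * (1 - b x) + ε) ∂P := by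
          apply integral_mono ((f.integrable P).sub (hgint P)).abs ?_ hbound
          exact i1.add (integrable_const ε)
      _ = M * (1 - ∫ x, b x ∂P) + ε := by
          rw [integral_add i1 (integrable_const ε), integral_const_mul,
            integral_sub (integrable_const (1:ℝ)) (hbint P)]
          simp [measure_univ]
  -- conclusion
  have hgev : ∀ᶠ n in atTop, dist (∫ x, g x ∂(μ n)) (∫ x, g x ∂μl) < ε :=
    (Metric.tendsto_nhds.mp hgtend) ε hε0
  filter_upwards [hbev, hgev] with n hb1 hg1
  have e1 : |∫ x, f x ∂(μ n) - ∫ x, g x ∂(μ n)| ≤ M * (2*ε) + ε := by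
    refine le_trans (hkey (μ n)) ?_
    have h2 : 1 - ∫ x, b x ∂(μ n) ≤ 2*ε := by linarith
    have := mul_le_mul_of_nonneg_left h2 hM
    linarith
  have e2 : |∫ x, f x ∂μl - ∫ x, g x ∂μl| ≤ M * ε + ε := by
    refine le_trans (hkey μl) ?_
    have h2 : 1 - ∫ x, b x ∂μl ≤ ε := by linarith
    have := mul_le_mul_of_nonneg_left h2 hM
    linarith
  have e3 : |∫ x, g x ∂(μ n) - ∫ x, g x ∂μl| < ε := by
    rw [← Real.dist_eq]; exact hg1
  rw [Real.dist_eq]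
  have : |∫ x, f x ∂(μ n) - ∫ x, f x ∂μl| ≤
      |∫ x, f x ∂(μ n) - ∫ x, g x ∂(μ n)| + |∫ x, g x ∂(μ n) - ∫ x, g x ∂μl|
        + |∫ x, g x ∂μl - ∫ x, f x ∂μl| := by
    have := abs_sub_le (∫ x, f x ∂(μ n)) (∫ x, g x ∂(μ n)) (∫ x, f x ∂μl)
    have := abs_sub_le (∫ x, g x ∂(μ n)) (∫ x, g x ∂μl) (∫ x, f x ∂μl)
    linarith
  rw [abs_sub_comm (∫ x, g x ∂μl)] at this
  have hfin : |∫ x, f x ∂(μ n) - ∫ x, f x ∂μl| < M * (2*ε) + ε + ε + (M * ε + ε) := by linarith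
  refine lt_of_lt_of_le hfin ?_
  have heq : M * (2*ε) + ε + ε + (M * ε + ε) = 3*(M+1)*ε := by ring
  rw [heq]
  have hM1 : (M+1) ≠ 0 := by positivity
  calc 3*(M+1)*ε = (3/4)*δ := by rw [hεdef]; field_simp
    _ ≤ δ := by linarith


/-- Lévy continuity with a.e. convergence: If `ν_n, ν` are probability
measures on `ℝ^d` whose characteristic functions satisfy `φ_n(a) → φ(a)` for
Lebesgue-almost every `a ∈ ℝ^d`, then `ν_n ⇒ ν` weakly. -/
theorem stmt_15
    (d : ℕ) (ν : ℕ → Measure (Fin d → ℝ)) (νlim : Measure (Fin d → ℝ))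
    [∀ n, IsProbabilityMeasure (ν n)] [IsProbabilityMeasure νlim]
    (h : ∀ᵐ a : Fin d → ℝ, Tendsto
      (fun n => ∫ x, Complex.exp (Complex.I * ((∑ i, a i * x i : ℝ) : ℂ)) ∂(ν n))
      atTop
      (𝓝 (∫ x, Complex.exp (Complex.I * ((∑ i, a i * x i : ℝ) : ℂ)) ∂νlim))) :
    ∀ f : BoundedContinuousFunction (Fin d → ℝ) ℝ,
      Tendsto (fun n => ∫ x, f x ∂(ν n)) atTop (𝓝 (∫ x, f x ∂νlim)) := by
  set e := (MeasurableEquiv.toLp 2 (Fin d → ℝ)).symm with he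
  set μ : ℕ → Measure (EuclideanSpace ℝ (Fin d)) := fun n => (ν n).map e.symm with hμ
  set μl : Measure (EuclideanSpace ℝ (Fin d)) := νlim.map e.symm with hμl
  haveI : ∀ n, IsProbabilityMeasure (μ n) := fun n =>
    Measure.isProbabilityMeasure_map e.symm.measurable.aemeasurable
  haveI : IsProbabilityMeasure μl := Measure.isProbabilityMeasure_map e.symm.measurable.aemeasurable
  -- rewrite charf of mapped measure
  have hchar : ∀ (P : Measure (Fin d → ℝ)) [IsProbabilityMeasure P],
      ∀ ξ : EuclideanSpace ℝ (Fin d), charf (P.map e.symm) ξ =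
        ∫ x, Complex.exp (Complex.I * ((∑ i, (e ξ) i * x i : ℝ) : ℂ)) ∂P := by
    intro P _ ξ
    rw [charf, integral_map e.symm.measurable.aemeasurable]
    · congr 1
      ext x
      rw [mul_comm]
      congr 2
      simp [he, PiLp.inner_apply, mul_comm]
    · exact (Complex.continuous_exp.comp ((Complex.continuous_ofReal.comp
        (continuous_const.inner continuous_id)).mul continuous_const)).aestronglyMeasurable
  have hvp := EuclideanSpace.volume_preserving_symm_measurableEquiv_toLp (Fin d)
  have hae : ∀ᵐ ξ : EuclideanSpace ℝ (Fin d),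
      Tendsto (fun n => charf (μ n) ξ) atTop (𝓝 (charf μl ξ)) := by
    filter_upwards [hvp.quasiMeasurePreserving.ae h] with ξ hξ
    rw [hμl, hchar νlim ξ]
    have : (fun n => charf (μ n) ξ) =
        fun n => ∫ x, Complex.exp (Complex.I * ((∑ i, (e ξ) i * x i : ℝ) : ℂ)) ∂(ν n) := by
      ext n
      rw [hμ, hchar (ν n) ξ]
    rw [this]
    exact hξ
  intro f
  set F : BoundedContinuousFunction (EuclideanSpace ℝ (Fin d)) ℝ :=
    f.compContinuous (ContinuousMap.mk (fun ξ => e ξ)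
      (EuclideanSpace.equiv (Fin d) ℝ).continuous) with hF
  have hint : ∀ (P : Measure (Fin d → ℝ)) [IsProbabilityMeasure P],
      ∫ x, f x ∂P = ∫ ξ, F ξ ∂(P.map e.symm) := by
    intro P _
    rw [integral_map e.symm.measurable.aemeasurable
      (F.continuous.aestronglyMeasurable)]
    refine integral_congr_ae (Filter.Eventually.of_forall fun x => ?_)
    simp [hF]
    rfl
  have hmain := main_eucl d μ μl hae F
  have h1 : (fun n => ∫ x, f x ∂(ν n)) = fun n => ∫ ξ, F ξ ∂(μ n) := by
    ext n
    exact hint (ν n)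
  rw [h1, hint νlim]
  exact hmain
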